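/- Let N be a positive integer, let A = (a_ij) be a nonnegative real N×N matrix, let σ ≥ 0 and let ω ∈ ℝ^N be a vector with ω_i > 0 for all i and Σ_{i=1}^N ω_i a_ij = σ ω_j for all j. Let λ > 0 and α ∈ (0,1) satisfy λ(1+α)σ < 1. Suppose ρ : ℝ → ℝ^N and φ : ℝ → ℝ^N are such that for all t ≥ 0 and all i: 0 ≤ ρ_i(t) ≤ 1, 0 ≤ φ_i(t) ≤ 1, and ρ_i is differentiable at t with ρ_i′(t) = −ρ_i(t) + λ φ_i(t)(1−ρ_i(t)) Σ_{j=1}^N a_ij ρ_j(t). Then for each i, ρ_i(t) → 0 as t → ∞. -/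

import Mathlib

/-- Global attractivity of the disease-free equilibrium below the threshold:
if `ω` is a strictly positive left eigenvector of `A` with eigenvalue `σ` and
`λ(1+α)σ < 1`, every solution of the quenched mean-field SIS system in `[0,1]^N`
converges to zero. -/
theorem stmt_9 (N : ℕ) (hN : 0 < N) (A : Fin N → Fin N → ℝ)
    (hA : ∀ i j, 0 ≤ A i j)
    (σ : ℝ) (hσ : 0 ≤ σ)
    (ω : Fin N → ℝ) (hω : ∀ i, 0 < ω i)
    (heig : ∀ j, ∑ i, ω i * A i j = σ * ω j)
    (lam α : ℝ) (hlam : 0 < lam) (hα : α ∈ Set.Ioo (0 : ℝ) 1)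
    (hthr : lam * (1 + α) * σ < 1)
    (ρ φ : ℝ → Fin N → ℝ)
    (hρ : ∀ t : ℝ, 0 ≤ t → ∀ i, ρ t i ∈ Set.Icc (0 : ℝ) 1)
    (hφ : ∀ t : ℝ, 0 ≤ t → ∀ i, φ t i ∈ Set.Icc (0 : ℝ) 1)
    (hode : ∀ t : ℝ, 0 ≤ t → ∀ i,
      HasDerivAt (fun s => ρ s i)
        (-(ρ t i) + lam * φ t i * (1 - ρ t i) * ∑ j, A i j * ρ t j) t) :
    ∀ i, Filter.Tendsto (fun t => ρ t i) Filter.atTop (nhds 0) := by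
  set c : ℝ := 1 - lam * σ with hc_def
  have hc : 0 < c := by
    have h1 : lam * σ ≤ lam * (1 + α) * σ := by
      nlinarith [mul_nonneg (mul_nonneg hlam.le hα.1.le) hσ]
    simp only [hc_def]; linarith
  set V : ℝ → ℝ := fun t => ∑ i, ω i * ρ t i with hV_def
  set D : ℝ → ℝ := fun t => ∑ i, ω i *
      (-(ρ t i) + lam * φ t i * (1 - ρ t i) * ∑ j, A i j * ρ t j) with hD_def
  have hVderiv : ∀ t : ℝ, 0 ≤ t → HasDerivAt V (D t) t := by
    intro t ht
    exact HasDerivAt.fun_sum fun i _ => (hode t ht i).const_mul (ω i)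
  have hVnonneg : ∀ t : ℝ, 0 ≤ t → 0 ≤ V t := by
    intro t ht
    exact Finset.sum_nonneg fun i _ => mul_nonneg (hω i).le (hρ t ht i).1
  have hDbound : ∀ t : ℝ, 0 ≤ t → D t ≤ -c * V t := by
    intro t ht
    have hstep : D t ≤ ∑ i, (-(ω i * ρ t i) + lam * (ω i * ∑ j, A i j * ρ t j)) := by
      apply Finset.sum_le_sum
      intro i _
      have hS : 0 ≤ ∑ j, A i j * ρ t j :=
        Finset.sum_nonneg fun j _ => mul_nonneg (hA i j) (hρ t ht j).1
      have hφi := hφ t ht i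
      have hρi := hρ t ht i
      have hkey : lam * φ t i * (1 - ρ t i) * (∑ j, A i j * ρ t j)
          ≤ lam * ∑ j, A i j * ρ t j := by
        have : lam * φ t i * (1 - ρ t i) ≤ lam := by
          have h2 : φ t i * (1 - ρ t i) ≤ 1 :=
            mul_le_one₀ hφi.2 (by linarith [hρi.2]) (by linarith [hρi.1])
          nlinarith [hlam.le]
        exact mul_le_mul_of_nonneg_right this hS
      have hωi := (hω i).le
      nlinarith [mul_le_mul_of_nonneg_left hkey hωi]
    have hswap : ∑ i, (-(ω i * ρ t i) + lam * (ω i * ∑ j, A i j * ρ t j))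
        = -V t + lam * σ * V t := by
      rw [Finset.sum_add_distrib, Finset.sum_neg_distrib, ← Finset.mul_sum]
      have : ∑ i, ω i * ∑ j, A i j * ρ t j = σ * V t := by
        simp_rw [Finset.mul_sum]
        rw [Finset.sum_comm]
        have : ∀ j ∈ Finset.univ, ∑ i, ω i * (A i j * ρ t j)
            = σ * (ω j * ρ t j) := by
          intro j _
          calc ∑ i, ω i * (A i j * ρ t j) = (∑ i, ω i * A i j) * ρ t j := by
                rw [Finset.sum_mul]; exact Finset.sum_congr rfl fun _ _ => by ring
            _ = σ * (ω j * ρ t j) := by rw [heig j]; ring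
        rw [Finset.sum_congr rfl this, ← Finset.mul_sum, hV_def, Finset.mul_sum]
      rw [this]; ring
    calc D t ≤ -V t + lam * σ * V t := hstep.trans_eq hswap
      _ = -c * V t := by simp only [hc_def]; ring
  -- g = V * exp(c t) is antitone on [0, ∞)
  set g : ℝ → ℝ := fun t => V t * Real.exp (c * t) with hg_def
  have hgderiv : ∀ t : ℝ, 0 ≤ t →
      HasDerivAt g (D t * Real.exp (c * t) + V t * (c * Real.exp (c * t))) t := by
    intro t ht
    have he : HasDerivAt (fun s : ℝ => Real.exp (c * s)) (c * Real.exp (c * t)) t := by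
      have := ((hasDerivAt_id t).const_mul c).exp
      simpa [mul_comm] using this
    exact (hVderiv t ht).mul he
  have hganti : AntitoneOn g (Set.Ici (0 : ℝ)) := by
    apply antitoneOn_of_deriv_nonpos (convex_Ici 0)
    · intro t ht
      exact ((hgderiv t ht).continuousAt).continuousWithinAt
    · intro t ht
      rw [interior_Ici] at ht
      exact (hgderiv t ht.le).differentiableAt.differentiableWithinAt
    · intro t ht
      rw [interior_Ici] at ht
      rw [(hgderiv t ht.le).deriv]
      have hexp : 0 < Real.exp (c * t) := Real.exp_pos _
      have hD := hDbound t ht.le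
      nlinarith [hVnonneg t ht.le]
  have hVle : ∀ t : ℝ, 0 ≤ t → V t ≤ V 0 * Real.exp (-(c * t)) := by
    intro t ht
    have h0 : g t ≤ g 0 := hganti Set.self_mem_Ici ht ht
    have hg0 : g 0 = V 0 := by simp [hg_def]
    have hexp : 0 < Real.exp (c * t) := Real.exp_pos _
    have : V t * Real.exp (c * t) ≤ V 0 := by rw [← hg0]; exact h0
    calc V t = V t * Real.exp (c * t) * Real.exp (-(c * t)) := by
          rw [mul_assoc, ← Real.exp_add]; simp
      _ ≤ V 0 * Real.exp (-(c * t)) :=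
          mul_le_mul_of_nonneg_right this (Real.exp_pos _).le
  have hVtend : Filter.Tendsto V Filter.atTop (nhds 0) := by
    have hub : Filter.Tendsto (fun t => V 0 * Real.exp (-(c * t)))
        Filter.atTop (nhds 0) := by
      have h1 : Filter.Tendsto (fun t : ℝ => c * t) Filter.atTop Filter.atTop :=
        Filter.Tendsto.const_mul_atTop hc Filter.tendsto_id
      have h2 : Filter.Tendsto (fun t : ℝ => Real.exp (-(c * t)))
          Filter.atTop (nhds 0) :=
        Real.tendsto_exp_neg_atTop_nhds_zero.comp h1
      simpa using h2.const_mul (V 0)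
    apply tendsto_of_tendsto_of_tendsto_of_le_of_le' tendsto_const_nhds hub
    · exact Filter.eventually_atTop.2 ⟨0, fun t ht => hVnonneg t ht⟩
    · exact Filter.eventually_atTop.2 ⟨0, fun t ht => hVle t ht⟩
  intro i
  have hωi := hω i
  have hup : Filter.Tendsto (fun t => V t / ω i) Filter.atTop (nhds 0) := by
    simpa using hVtend.div_const (ω i)
  apply tendsto_of_tendsto_of_tendsto_of_le_of_le' tendsto_const_nhds hup
  · exact Filter.eventually_atTop.2 ⟨0, fun t ht => (hρ t ht i).1⟩
  · refine Filter.eventually_atTop.2 ⟨0, fun t ht => ?_⟩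
    rw [le_div_iff₀ hωi]
    have : ω i * ρ t i ≤ V t :=
      Finset.single_le_sum (f := fun j => ω j * ρ t j)
        (fun j _ => mul_nonneg (hω j).le (hρ t ht j).1) (Finset.mem_univ i)
    linarith
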